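/- Let G ∈ F^{k×n} be a generator matrix with rows g_1,...,g_k having spans (a_l, b_l], and let M_i ∈ F^{k×k} be the diagonal matrix with (l,l)-entry equal to 1 if i ∈ (a_l,b_l] and 0 otherwise. If the starting points a_1,...,a_k are pairwise distinct, then for each i, rank(M_i, G_i, M_{i+1}) = rank(M_i) + [i ∈ {a_1,...,a_k}], where G_i is the i-th column of G and [·] is the indicator. -/

import Mathlib

/-- Membership in the half-open circular interval `(a, b]` on `ZMod n`, with `(a,a] = ∅`. -/
def circMem (n : ℕ) [NeZero n] (a b j : ZMod n) : Prop :=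
  j ≠ a ∧ (j - a).val ≤ (b - a).val

instance (n : ℕ) [NeZero n] (a b j : ZMod n) : Decidable (circMem n a b j) :=
  inferInstanceAs (Decidable (_ ∧ _))

/-- `(a, b]` is a span of `g` : `g` is nonzero at `a` and `b` and vanishes outside the
closed span `[a,b] = {a} ∪ (a,b]`. -/
def IsSpan {F : Type*} [Field F] {n : ℕ} [NeZero n] (g : ZMod n → F) (a b : ZMod n) : Prop :=
  g a ≠ 0 ∧ g b ≠ 0 ∧ ∀ j : ZMod n, ¬ (j = a ∨ circMem n a b j) → g j = 0

section Aux

variable {n : ℕ} [NeZero n]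

lemma zmod_val_succ {x : ZMod n} (hx : x ≠ 0) (hx1 : x + 1 ≠ 0) :
    (x + 1).val = x.val + 1 := by
  have hxv : x.val ≠ 0 := fun h => hx ((ZMod.val_eq_zero x).mp h)
  have hxlt : x.val < n := ZMod.val_lt x
  have hn : 1 < n := by omega
  haveI : Fact (1 < n) := ⟨hn⟩
  have hne : x.val + 1 ≠ n := by
    intro h
    apply hx1
    have h0 : ((x.val + 1 : ℕ) : ZMod n) = 0 := by rw [h]; exact ZMod.natCast_self n
    rwa [Nat.cast_add, Nat.cast_one, ZMod.natCast_zmod_val] at h0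
  have hlt : x.val + (1 : ZMod n).val < n := by rw [ZMod.val_one]; omega
  rw [ZMod.val_add_of_lt hlt, ZMod.val_one]

lemma not_circMem_succ {a b i : ZMod n} (h1 : i ≠ a) (h2 : ¬ circMem n a b i) :
    ¬ circMem n a b (i + 1) := by
  rintro ⟨h3, h4⟩
  refine h2 ⟨h1, ?_⟩
  have hsub : i + 1 - a = (i - a) + 1 := by ring
  have hx0 : i - a ≠ 0 := sub_ne_zero.mpr h1
  have hx1 : (i - a) + 1 ≠ 0 := by rw [← hsub]; exact sub_ne_zero.mpr h3
  have h4' : ((i - a) + 1).val ≤ (b - a).val := by rwa [hsub] at h4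
  rw [zmod_val_succ hx0 hx1] at h4'
  omega

end Aux

/-- If the starting points `a_1, …, a_k` are pairwise distinct, then
`rank (M_i | G_i | M_{i+1}) = rank M_i + [i ∈ {a_1,…,a_k}]`. -/
theorem rank_concat_eq_rank_add_indicator_start {F : Type*} [Field F] {n k : ℕ} [NeZero n]
    (G : Matrix (Fin k) (ZMod n) F) (a b : Fin k → ZMod n)
    (hspan : ∀ l, IsSpan (G l) (a l) (b l))
    (ha : Function.Injective a)
    (M : ZMod n → Matrix (Fin k) (Fin k) F)
    (hM : ∀ i, M i = Matrix.diagonal fun l => if circMem n (a l) (b l) i then (1 : F) else 0)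
    (i : ZMod n) :
    (Matrix.of fun l (j : Fin k ⊕ Unit ⊕ Fin k) =>
        Sum.elim (fun j' => M i l j')
          (Sum.elim (fun _ => G l i) fun j' => M (i + 1) l j') j).rank
      = (M i).rank + (if ∃ l, a l = i then 1 else 0) := by
  classical
  set v : Fin k → (Fin k ⊕ Unit ⊕ Fin k) → F := fun l =>
    Sum.elim (fun j' => M i l j')
      (Sum.elim (fun _ => G l i) fun j' => M (i + 1) l j') with hv
  set P : Fin k → Prop := fun l => circMem n (a l) (b l) i ∨ a l = i with hP
  -- zero rows
  have hrow0 : ∀ l, ¬ P l → v l = 0 := by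
    intro l hl
    have h1 : ¬ circMem n (a l) (b l) i := fun h => hl (Or.inl h)
    have h2 : i ≠ a l := fun h => hl (Or.inr h.symm)
    funext j
    rcases j with j | j | j
    · show M i l j = 0
      simp [hM i, Matrix.diagonal_apply, h1]
    · show G l i = 0
      exact (hspan l).2.2 i (by push_neg; exact ⟨h2, h1⟩)
    · show M (i + 1) l j = 0
      simp [hM (i + 1), Matrix.diagonal_apply, not_circMem_succ h2 h1]
  -- linear independence of the nonzero rows
  have hli : LinearIndependent F (fun m : {l // P l} => v m.val) := by
    rw [Fintype.linearIndependent_iff]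
    intro c hc
    have hsum : ∀ j, (∑ m : {l // P l}, c m • v m.val) j = 0 := fun j => by rw [hc]; rfl
    have hQ : ∀ m : {l // P l}, circMem n (a m.val) (b m.val) i → c m = 0 := by
      intro m hm
      have hs := hsum (Sum.inl m.val)
      rw [Finset.sum_apply] at hs
      rw [Finset.sum_eq_single m] at hs
      · simpa [hv, hM i, Matrix.diagonal_apply_eq, hm] using hs
      · intro m' _ hne
        have hne' : m'.val ≠ m.val := fun h => hne (Subtype.ext h)
        simp [hv, hM i, Matrix.diagonal_apply_ne _ hne']
      · simp
    intro m
    by_cases hm : circMem n (a m.val) (b m.val) i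
    · exact hQ m hm
    · have ham : a m.val = i := m.property.resolve_left hm
      have hs := hsum (Sum.inr (Sum.inl ()))
      rw [Finset.sum_apply] at hs
      rw [Finset.sum_eq_single m] at hs
      · have hG : G m.val i ≠ 0 := by rw [← ham]; exact (hspan m.val).1
        have h' : c m * G m.val i = 0 := by simpa [hv] using hs
        rcases mul_eq_zero.mp h' with h | h
        · exact h
        · exact absurd h hG
      · intro m' _ hne
        by_cases hq : circMem n (a m'.val) (b m'.val) i
        · simp [hQ m' hq]
        · have h' : a m'.val = i := m'.property.resolve_left hq
          exact absurd (Subtype.ext (ha (h'.trans ham.symm))) hne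
      · simp
  -- rank of the big matrix
  have hsp : Submodule.span F (Set.range v) = Submodule.span F (v '' {l | P l}) := by
    apply le_antisymm
    · rw [Submodule.span_le]
      rintro _ ⟨l, rfl⟩
      by_cases hl : P l
      · exact Submodule.subset_span ⟨l, hl, rfl⟩
      · rw [hrow0 l hl]; exact (Submodule.span F _).zero_mem
    · exact Submodule.span_mono (Set.image_subset_range _ _)
  have hrank : (Matrix.of fun l (j : Fin k ⊕ Unit ⊕ Fin k) =>
        Sum.elim (fun j' => M i l j')
          (Sum.elim (fun _ => G l i) fun j' => M (i + 1) l j') j).rank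
      = Fintype.card {l // P l} := by
    have h0 : (Matrix.of fun l (j : Fin k ⊕ Unit ⊕ Fin k) =>
        Sum.elim (fun j' => M i l j')
          (Sum.elim (fun _ => G l i) fun j' => M (i + 1) l j') j) = Matrix.of v := rfl
    rw [h0, Matrix.rank_eq_finrank_span_row]
    have h1 : Set.range (Matrix.of v).row = Set.range v := rfl
    rw [h1, hsp, Set.image_eq_range]
    exact finrank_span_eq_card hli
  -- rank of M i
  have hMi : (M i).rank = Fintype.card {l // circMem n (a l) (b l) i} := by
    rw [hM i, Matrix.rank_diagonal]
    apply Fintype.card_congr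
    apply Equiv.subtypeEquivRight
    intro l
    by_cases h : circMem n (a l) (b l) i <;> simp [h]
  -- counting
  have hcard : Fintype.card {l // P l}
      = Fintype.card {l // circMem n (a l) (b l) i} + (if ∃ l, a l = i then 1 else 0) := by
    by_cases h : ∃ l, a l = i
    · obtain ⟨l₀, hl₀⟩ := h
      rw [if_pos ⟨l₀, hl₀⟩, Fintype.card_subtype, Fintype.card_subtype]
      have hsplit : (Finset.univ.filter P)
          = Finset.univ.filter (fun l => circMem n (a l) (b l) i)
            ∪ Finset.univ.filter (fun l => a l = i) := by
        rw [← Finset.filter_or]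
      have hdisj : Disjoint (Finset.univ.filter (fun l => circMem n (a l) (b l) i))
          (Finset.univ.filter (fun l => a l = i)) := by
        rw [Finset.disjoint_left]
        intro x hx hx'
        simp only [Finset.mem_filter] at hx hx'
        exact hx.2.1 hx'.2.symm
      have hone : (Finset.univ.filter (fun l => a l = i)) = {l₀} := by
        ext l
        simp only [Finset.mem_filter, Finset.mem_univ, true_and, Finset.mem_singleton]
        constructor
        · intro hl; exact ha (hl.trans hl₀.symm)
        · rintro rfl; exact hl₀
      rw [hsplit, Finset.card_union_of_disjoint hdisj, hone, Finset.card_singleton]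
    · rw [if_neg h, Nat.add_zero]
      apply Fintype.card_congr
      apply Equiv.subtypeEquivRight
      intro l
      constructor
      · rintro (h' | h')
        · exact h'
        · exact absurd ⟨l, h'⟩ h
      · exact Or.inl
  rw [hrank, hcard, hMi]
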